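/- Let z = (y₁ i, y₂ i) ∈ ℍ × ℍ with y₁, y₂ > 0, and consider the embedding g(t,x,y) = (x + i e^t y₁, y + i e^{-t} y₂) of ℝ³ into ℍ × ℍ. The pullback under g of the metric (dx₁² + dy₁²)/(2y₁²) + (dx₂² + dy₂²)/(2y₂²) on ℍ × ℍ equals dt² + (e^{-2t}/(2y₁²)) dx² + (e^{2t}/(2y₂²)) dy². In particular, when y₁ = y₂ = 1/√2 this pullback equals the Sol metric dt² + e^{-2t} dx² + e^{2t} dy². -/

import Mathlib

/-- The embedding `g(t,x,y) = (x + i e^t y₁, y + i e^{-t} y₂)` of ℝ³ into ℍ × ℍ,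
written in real coordinates `(x₁, y₁, x₂, y₂)`. -/
noncomputable def leafEmbed (y₁ y₂ : ℝ) (p : ℝ × ℝ × ℝ) : ℝ × ℝ × ℝ × ℝ :=
  (p.2.1, Real.exp p.1 * y₁, p.2.2, Real.exp (-p.1) * y₂)

/-- The metric `(dx₁² + dy₁²)/(2y₁²) + (dx₂² + dy₂²)/(2y₂²)` on ℍ × ℍ, as a
quadratic form on tangent vectors `u` at the point `w`. -/
noncomputable def halfHypMetric (w u : ℝ × ℝ × ℝ × ℝ) : ℝ :=
  (u.1 ^ 2 + u.2.1 ^ 2) / (2 * w.2.1 ^ 2) + (u.2.2.1 ^ 2 + u.2.2.2 ^ 2) / (2 * w.2.2.2 ^ 2)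

noncomputable def leafDeriv (y₁ y₂ : ℝ) (p : ℝ × ℝ × ℝ) : ℝ × ℝ × ℝ →L[ℝ] ℝ × ℝ × ℝ × ℝ :=
  let c1 : ℝ × ℝ × ℝ →L[ℝ] ℝ := ContinuousLinearMap.fst ℝ ℝ (ℝ × ℝ)
  let c2 : ℝ × ℝ × ℝ →L[ℝ] ℝ :=
    (ContinuousLinearMap.fst ℝ ℝ ℝ).comp (ContinuousLinearMap.snd ℝ ℝ (ℝ × ℝ))
  let c3 : ℝ × ℝ × ℝ →L[ℝ] ℝ :=
    (ContinuousLinearMap.snd ℝ ℝ ℝ).comp (ContinuousLinearMap.snd ℝ ℝ (ℝ × ℝ))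
  c2.prod (((Real.exp p.1 * y₁) • c1).prod (c3.prod ((Real.exp (-p.1) * y₂) • (-c1))))

theorem leafEmbed_hasFDerivAt (y₁ y₂ : ℝ) (p : ℝ × ℝ × ℝ) :
    HasFDerivAt (leafEmbed y₁ y₂) (leafDeriv y₁ y₂ p) p := by
  have h1 : HasFDerivAt (fun q : ℝ × ℝ × ℝ => q.1)
      (ContinuousLinearMap.fst ℝ ℝ (ℝ × ℝ)) p := hasFDerivAt_fst
  have h2 : HasFDerivAt (fun q : ℝ × ℝ × ℝ => q.2.1)
      ((ContinuousLinearMap.fst ℝ ℝ ℝ).comp (ContinuousLinearMap.snd ℝ ℝ (ℝ × ℝ))) p :=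
    hasFDerivAt_fst.comp p hasFDerivAt_snd
  have h3 : HasFDerivAt (fun q : ℝ × ℝ × ℝ => q.2.2)
      ((ContinuousLinearMap.snd ℝ ℝ ℝ).comp (ContinuousLinearMap.snd ℝ ℝ (ℝ × ℝ))) p :=
    hasFDerivAt_snd.comp p hasFDerivAt_snd
  have hA : HasFDerivAt (fun q : ℝ × ℝ × ℝ => Real.exp q.1 * y₁)
      ((Real.exp p.1 * y₁) • ContinuousLinearMap.fst ℝ ℝ (ℝ × ℝ)) p := by
    have := (h1.exp).mul_const y₁
    refine this.congr_fderiv ?_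
    ext v <;> simp [mul_comm, mul_assoc, mul_left_comm]
  have hB : HasFDerivAt (fun q : ℝ × ℝ × ℝ => Real.exp (-q.1) * y₂)
      ((Real.exp (-p.1) * y₂) • (-(ContinuousLinearMap.fst ℝ ℝ (ℝ × ℝ)))) p := by
    have := (h1.neg.exp).mul_const y₂
    refine this.congr_fderiv ?_
    ext v <;> simp <;> ring
  exact h2.prodMk (hA.prodMk (h3.prodMk hB))

/-- The pullback under `g` of the half-product hyperbolic metric on ℍ × ℍ equals
`dt² + (e^{-2t}/(2y₁²)) dx² + (e^{2t}/(2y₂²)) dy²`; in particular, for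
`y₁ = y₂ = 1/√2` it is the Sol metric `dt² + e^{-2t} dx² + e^{2t} dy²`. -/
theorem pullback_metric_leaf (y₁ y₂ : ℝ) (hy₁ : 0 < y₁) (hy₂ : 0 < y₂) :
    (∀ (p v : ℝ × ℝ × ℝ),
      halfHypMetric (leafEmbed y₁ y₂ p) (fderiv ℝ (leafEmbed y₁ y₂) p v) =
        v.1 ^ 2 + Real.exp (-2 * p.1) / (2 * y₁ ^ 2) * v.2.1 ^ 2
          + Real.exp (2 * p.1) / (2 * y₂ ^ 2) * v.2.2 ^ 2) ∧
    (y₁ = 1 / Real.sqrt 2 → y₂ = 1 / Real.sqrt 2 →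
      ∀ (p v : ℝ × ℝ × ℝ),
        halfHypMetric (leafEmbed y₁ y₂ p) (fderiv ℝ (leafEmbed y₁ y₂) p v) =
          v.1 ^ 2 + Real.exp (-2 * p.1) * v.2.1 ^ 2 + Real.exp (2 * p.1) * v.2.2 ^ 2) := by
  have key : ∀ (p v : ℝ × ℝ × ℝ),
      halfHypMetric (leafEmbed y₁ y₂ p) (fderiv ℝ (leafEmbed y₁ y₂) p v) =
        v.1 ^ 2 + Real.exp (-2 * p.1) / (2 * y₁ ^ 2) * v.2.1 ^ 2
          + Real.exp (2 * p.1) / (2 * y₂ ^ 2) * v.2.2 ^ 2 := by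
    intro p v
    rw [(leafEmbed_hasFDerivAt y₁ y₂ p).fderiv]
    simp only [leafDeriv, halfHypMetric, leafEmbed, ContinuousLinearMap.prod_apply,
      ContinuousLinearMap.smul_apply, ContinuousLinearMap.comp_apply,
      ContinuousLinearMap.neg_apply, ContinuousLinearMap.coe_fst',
      ContinuousLinearMap.coe_snd', smul_eq_mul]
    have e1 : Real.exp p.1 ≠ 0 := Real.exp_ne_zero _
    have e2 : Real.exp (-p.1) ≠ 0 := Real.exp_ne_zero _
    have hn1 : Real.exp (-2 * p.1) = Real.exp (-p.1) * Real.exp (-p.1) := by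
      rw [← Real.exp_add]; ring_nf
    have hn2 : Real.exp (2 * p.1) = Real.exp p.1 * Real.exp p.1 := by
      rw [← Real.exp_add]; ring_nf
    rw [hn1, hn2] at *
    simp only [Real.exp_neg] at *
    field_simp
    ring
  refine ⟨key, fun h1 h2 p v => ?_⟩
  rw [key p v, h1, h2]
  have : ((1 : ℝ) / Real.sqrt 2) ^ 2 = 1 / 2 := by
    rw [div_pow, one_pow, Real.sq_sqrt (by norm_num : (2:ℝ) ≥ 0)]
  rw [this]
  norm_num
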